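/- arXiv:2604.17765 — 4 statements merged into one kernel-verified Lean document; each statement's English description precedes it below -/
import Mathlib

section
/- Under the standing hypotheses, if τ is a state on M that is h-independent over R, then |I_τ|^{1/h} + |J_τ|^{1/h} ≤ 2√2. -/
open scoped ComplexOrder

/-- Product of `f` over a finite set of indices, taken in increasing index order.
(In our applications the factors mutually commute, so the order is immaterial.) -/
noncomputable def ordProd {M : Type*} [Monoid M] {m : ℕ}
    (s : Finset (Fin m)) (f : Fin m → M) : M :=
  ((s.sort (· ≤ ·)).map f).prod

section Aux

variable {M : Type*} {ι : Type*}

lemma listProd_mul_listProd [Monoid M] (x y : ι → M) :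
    ∀ l : List ι, l.Nodup → (∀ i ∈ l, ∀ j ∈ l, i ≠ j → Commute (x i) (y j)) →
      (l.map x).prod * (l.map y).prod = (l.map fun i => x i * y i).prod
  | [], _, _ => by simp
  | a :: t, hnd, hc => by
    have hnd' := List.nodup_cons.mp hnd
    have hcomm : Commute (y a) ((t.map x).prod) := by
      refine Commute.list_prod_right _ _ fun z hz => ?_
      obtain ⟨i, hi, rfl⟩ := List.mem_map.mp hz
      exact (hc i (List.mem_cons_of_mem _ hi) a (List.mem_cons_self)
        (fun hia => hnd'.1 (hia ▸ hi))).symm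
    have ih := listProd_mul_listProd x y t hnd'.2 fun i hi j hj hij =>
      hc i (List.mem_cons_of_mem _ hi) j (List.mem_cons_of_mem _ hj) hij
    have key : (t.map x).prod * (y a * (t.map y).prod)
        = y a * ((t.map x).prod * (t.map y).prod) := by
      rw [← mul_assoc, ← hcomm.eq, mul_assoc]
    simp only [List.map_cons, List.prod_cons]
    rw [mul_assoc, key, ih, ← mul_assoc]

lemma listProd_isSelfAdjoint [Monoid M] [StarMul M] (x : ι → M) :
    ∀ l : List ι, l.Nodup → (∀ i ∈ l, ∀ j ∈ l, i ≠ j → Commute (x i) (x j)) →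
      (∀ i ∈ l, IsSelfAdjoint (x i)) → IsSelfAdjoint (l.map x).prod
  | [], _, _, _ => by simp only [List.map_nil, List.prod_nil]; exact IsSelfAdjoint.one (R := M)
  | a :: t, hnd, hc, hsa => by
    have hnd' := List.nodup_cons.mp hnd
    have hP : IsSelfAdjoint ((t.map x).prod) :=
      listProd_isSelfAdjoint x t hnd'.2
        (fun i hi j hj hij => hc i (List.mem_cons_of_mem _ hi) j (List.mem_cons_of_mem _ hj) hij)
        (fun i hi => hsa i (List.mem_cons_of_mem _ hi))
    have hcomm : Commute (x a) ((t.map x).prod) := by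
      refine Commute.list_prod_right _ _ fun z hz => ?_
      obtain ⟨i, hi, rfl⟩ := List.mem_map.mp hz
      exact hc a (List.mem_cons_self) i (List.mem_cons_of_mem _ hi)
        (fun hia => hnd'.1 (hia ▸ hi))
    simp only [List.map_cons, List.prod_cons]
    rw [IsSelfAdjoint, star_mul, hP.star_eq, (hsa a (List.mem_cons_self)).star_eq,
      ← hcomm.eq]

lemma norm_listProd_le_one [NormedRing M] [NormOneClass M] (f : ι → M) :
    ∀ l : List ι, (∀ i ∈ l, ‖f i‖ ≤ 1) → ‖(l.map f).prod‖ ≤ 1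
  | [], _ => by simp
  | a :: t, hl => by
    simp only [List.map_cons, List.prod_cons]
    refine (norm_mul_le _ _).trans ?_
    exact mul_le_one₀ (hl a (List.mem_cons_self))
      (norm_nonneg _) (norm_listProd_le_one f t fun i hi => hl i (List.mem_cons_of_mem _ hi))

lemma posMap_nonneg [Ring M] [StarRing M] [PartialOrder M] [StarOrderedRing M]
    [Module ℂ M]
    (τ : M →ₗ[ℂ] ℂ) (hτpos : ∀ a : M, 0 ≤ τ (star a * a)) {d : M} (hd : 0 ≤ d) : 0 ≤ τ d := by
  rw [StarOrderedRing.nonneg_iff] at hd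
  induction hd using AddSubmonoid.closure_induction with
  | mem x hx => obtain ⟨s, rfl⟩ := hx; exact hτpos s
  | zero => simp
  | add x y hx hy hx' hy' => rw [map_add]; exact add_nonneg hx' hy'

lemma posMap_cauchy_schwarz [Ring M] [StarRing M] [Algebra ℂ M] [StarModule ℂ M]
    (τ : M →ₗ[ℂ] ℂ) (hτpos : ∀ a : M, 0 ≤ τ (star a * a)) (a b : M) :
    ‖τ (star a * b)‖ ^ 2 ≤ (τ (star a * a)).re * (τ (star b * b)).re := by
  set c := τ (star a * b) with hc
  have hAnn := hτpos a
  have hBnn := hτpos b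
  rw [Complex.nonneg_iff] at hAnn hBnn
  set A := (τ (star a * a)).re with hA
  set B := (τ (star b * b)).re with hB
  have expand : ∀ t : ℂ, τ (star (t • a + b) * (t • a + b)) =
      (starRingEnd ℂ) t * t * τ (star a * a) + (starRingEnd ℂ) t * τ (star a * b)
        + t * τ (star b * a) + τ (star b * b) := by
    intro t
    rw [star_add, star_smul, add_mul, mul_add, mul_add]
    simp only [map_add, smul_mul_assoc, mul_smul_comm, map_smul, smul_smul, smul_eq_mul,
      starRingEnd_apply]
    ring
  -- Hermitian symmetry
  have hherm : τ (star b * a) = (starRingEnd ℂ) c := by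
    have h1 := hτpos ((1 : ℂ) • a + b)
    rw [expand 1] at h1
    have hI := hτpos (Complex.I • a + b)
    rw [expand Complex.I] at hI
    rw [Complex.nonneg_iff] at h1 hI
    have e1 := h1.2
    have e2 := hI.2
    simp only [map_one, one_mul, Complex.add_im, Complex.mul_im, Complex.conj_re, Complex.conj_im,
      Complex.I_re, Complex.I_im, Complex.mul_re, map_one] at e1 e2
    apply Complex.ext
    · simp only [Complex.conj_re]
      nlinarith [hAnn.2, hBnn.2, e1, e2]
    · simp only [Complex.conj_im]
      nlinarith [hAnn.2, hBnn.2, e1, e2]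
  have key : ∀ r : ℝ, 0 ≤ r ^ 2 * Complex.normSq c * A - 2 * r * Complex.normSq c + B := by
    intro r
    have h0 := hτpos ((-(r : ℂ) * c) • a + b)
    rw [expand _, hherm, Complex.nonneg_iff] at h0
    have h1 := h0.1
    simp only [map_mul, map_neg, Complex.conj_ofReal, Complex.add_re, Complex.mul_re,
      Complex.mul_im, Complex.neg_re, Complex.neg_im, Complex.conj_re, Complex.conj_im,
      Complex.ofReal_re, Complex.ofReal_im, Complex.normSq_apply] at h1 ⊢
    nlinarith [h1, hAnn.2, hBnn.2]
  have habs : ‖c‖ ^ 2 = Complex.normSq c := Complex.sq_norm c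
  rcases eq_or_ne c 0 with h0 | h0
  · rw [h0]
    simp only [norm_zero]
    have := mul_nonneg hAnn.1 hBnn.1
    simpa using this
  · have hnc : 0 < Complex.normSq c := Complex.normSq_pos.mpr h0
    rcases eq_or_lt_of_le hAnn.1 with hA0 | hA0
    · exfalso
      have hk := key ((B + 1) / (2 * Complex.normSq c))
      rw [← hA0] at hk
      have h2 : (B + 1) / (2 * Complex.normSq c) * (2 * Complex.normSq c) = B + 1 := by
        field_simp
      nlinarith [hk, hBnn.1, hnc]
    · have hk := key (1 / A)
      have hk2 : 0 ≤ A * ((1 / A) ^ 2 * Complex.normSq c * A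
          - 2 * (1 / A) * Complex.normSq c + B) := mul_nonneg hA0.le hk
      have heq : A * ((1 / A) ^ 2 * Complex.normSq c * A
          - 2 * (1 / A) * Complex.normSq c + B) = A * B - Complex.normSq c := by
        field_simp
        ring
      rw [heq] at hk2
      rw [habs]
      linarith

end Aux

theorem bell_type_inequality_upper_bound
    {M : Type*} [NormedRing M] [StarRing M] [CStarRing M] [CompleteSpace M]
    [NormedAlgebra ℂ M] [StarModule ℂ M] [PartialOrder M] [StarOrderedRing M]
    {m : ℕ} (hm : 2 ≤ m)
    (Msub : Fin m → StarSubalgebra ℂ M)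
    (hcomm : ∀ i j : Fin m, i ≠ j → ∀ x ∈ Msub i, ∀ y ∈ Msub j, Commute x y)
    (A0 A1 : Fin m → M)
    (hA0mem : ∀ i, A0 i ∈ Msub i) (hA1mem : ∀ i, A1 i ∈ Msub i)
    (hA0sa : ∀ i, IsSelfAdjoint (A0 i)) (hA1sa : ∀ i, IsSelfAdjoint (A1 i))
    (hA0c : ∀ i, -1 ≤ A0 i ∧ A0 i ≤ 1) (hA1c : ∀ i, -1 ≤ A1 i ∧ A1 i ≤ 1)
    (R : Finset (Fin m)) (h : ℕ) (hh : 2 ≤ h) (hcard : R.card = h)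
    (τ : M →ₗ[ℂ] ℂ)
    (hτpos : ∀ a : M, 0 ≤ τ (star a * a)) (hτ1 : τ 1 = 1)
    (hind : ∀ x : Fin m → M, (∀ i ∈ R, x i ∈ Msub i) →
      τ (ordProd R x) = ∏ i ∈ R, τ (x i)) :
    ‖τ (ordProd R (fun i => A0 i + A1 i) * ordProd Rᶜ A0)‖ ^ (1 / (h : ℝ)) +
      ‖τ (ordProd R (fun i => A0 i - A1 i) * ordProd Rᶜ A1)‖ ^ (1 / (h : ℝ)) ≤
      2 * Real.sqrt 2 := by
  classical
  have hnt : Nontrivial M := by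
    by_contra hcon
    rw [not_nontrivial_iff_subsingleton] at hcon
    have h10 : (1 : M) = 0 := Subsingleton.elim _ _
    rw [h10, map_zero] at hτ1
    exact one_ne_zero hτ1.symm
  letI : CStarAlgebra M :=
    { ‹NormedRing M›, ‹StarRing M›, ‹CStarRing M›, ‹NormedAlgebra ℂ M›, ‹StarModule ℂ M›,
      ‹CompleteSpace M› with }
  -- norm bound for order-bounded self-adjoint elements
  have hnorm_le_one : ∀ a : M, IsSelfAdjoint a → -1 ≤ a → a ≤ 1 → ‖a‖ ≤ 1 := by
    intro a hsa h1 h2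
    have hup : ∀ x ∈ spectrum ℝ a, x ≤ 1 := by
      rw [← le_algebraMap_iff_spectrum_le (R := ℝ) (a := a) hsa]
      simpa using h2
    have hlow : ∀ x ∈ spectrum ℝ a, -1 ≤ x := by
      rw [← algebraMap_le_iff_le_spectrum (R := ℝ) (a := a) hsa]
      simpa using h1
    rcases CStarAlgebra.norm_or_neg_norm_mem_spectrum hsa with hmem | hmem
    · exact hup _ hmem
    · linarith [hlow _ hmem]
  -- τ is nonneg on positive elements and bounded by the norm
  have hτnonneg : ∀ {d : M}, 0 ≤ d → 0 ≤ τ d := fun hd => posMap_nonneg τ hτpos hd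
  have hτalg : ∀ r : ℝ, τ (algebraMap ℝ M r) = (r : ℂ) := by
    intro r
    rw [IsScalarTower.algebraMap_apply ℝ ℂ M, Algebra.algebraMap_eq_smul_one, map_smul, hτ1,
      smul_eq_mul, mul_one]
    rfl
  have hτ_le_norm : ∀ x : M, 0 ≤ x → (τ x).re ≤ ‖x‖ := by
    intro x hx
    have hsa : IsSelfAdjoint x := .of_nonneg hx
    have hle : x ≤ algebraMap ℝ M ‖x‖ := hsa.le_algebraMap_norm_self
    have hnn := hτnonneg (sub_nonneg.mpr hle)
    rw [map_sub, Complex.nonneg_iff, hτalg] at hnn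
    have := hnn.1
    simp only [Complex.sub_re, Complex.ofReal_re] at this
    linarith
  -- the sorted lists
  have hRnodup : (R.sort (· ≤ ·)).Nodup := R.sort_nodup _
  have hRcnodup : (Rᶜ.sort (· ≤ ·)).Nodup := Rᶜ.sort_nodup _
  have hRmem : ∀ i, i ∈ R.sort (· ≤ ·) ↔ i ∈ R := fun i => R.mem_sort _
  have hRcmem : ∀ i, i ∈ Rᶜ.sort (· ≤ ·) ↔ i ∈ Rᶜ := fun i => Rᶜ.mem_sort _
  -- commutation helper
  have hcomm' : ∀ (f g : Fin m → M), (∀ i, f i ∈ Msub i) → (∀ i, g i ∈ Msub i) →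
      ∀ (l : List (Fin m)), ∀ i ∈ l, ∀ j ∈ l, i ≠ j → Commute (f i) (g j) := by
    intro f g hf hg l i _ j _ hij
    exact hcomm i j hij _ (hf i) _ (hg j)
  -- the four operators
  set u : Fin m → M := fun i => A0 i + A1 i with hu
  set v : Fin m → M := fun i => A0 i - A1 i with hv
  have humem : ∀ i, u i ∈ Msub i := fun i => add_mem (hA0mem i) (hA1mem i)
  have hvmem : ∀ i, v i ∈ Msub i := fun i => sub_mem (hA0mem i) (hA1mem i)
  have husa : ∀ i, IsSelfAdjoint (u i) := fun i => (hA0sa i).add (hA1sa i)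
  have hvsa : ∀ i, IsSelfAdjoint (v i) := fun i => (hA0sa i).sub (hA1sa i)
  -- self-adjointness of the ordered products
  have hordProd_sa : ∀ (f : Fin m → M) (s : Finset (Fin m)), (∀ i, f i ∈ Msub i) →
      (∀ i, IsSelfAdjoint (f i)) → IsSelfAdjoint (ordProd s f) := by
    intro f s hfmem hfsa
    exact listProd_isSelfAdjoint f _ (s.sort_nodup _)
      (hcomm' f f hfmem hfmem _) (fun i _ => hfsa i)
  have hPsa : IsSelfAdjoint (ordProd R u) := hordProd_sa u R humem husa
  have hQsa : IsSelfAdjoint (ordProd R v) := hordProd_sa v R hvmem hvsa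
  have hBsa : IsSelfAdjoint (ordProd Rᶜ A0) := hordProd_sa A0 Rᶜ hA0mem hA0sa
  have hCsa : IsSelfAdjoint (ordProd Rᶜ A1) := hordProd_sa A1 Rᶜ hA1mem hA1sa
  -- squares of ordered products
  have hordProd_sq : ∀ (f : Fin m → M) (s : Finset (Fin m)), (∀ i, f i ∈ Msub i) →
      ordProd s f * ordProd s f = ordProd s (fun i => f i * f i) := by
    intro f s hfmem
    exact listProd_mul_listProd f f _ (s.sort_nodup _) (hcomm' f f hfmem hfmem _)
  -- norms of complement products
  have hnorm_B : ‖ordProd Rᶜ A0‖ ≤ 1 :=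
    norm_listProd_le_one A0 _ fun i _ => hnorm_le_one _ (hA0sa i) (hA0c i).1 (hA0c i).2
  have hnorm_C : ‖ordProd Rᶜ A1‖ ≤ 1 :=
    norm_listProd_le_one A1 _ fun i _ => hnorm_le_one _ (hA1sa i) (hA1c i).1 (hA1c i).2
  -- the per-site quantities
  set σ : Fin m → ℝ := fun i => (τ (u i * u i)).re with hσ
  set δ : Fin m → ℝ := fun i => (τ (v i * v i)).re with hδ
  have hsq_nonneg : ∀ (a : M), IsSelfAdjoint a → 0 ≤ τ (a * a) := by
    intro a hsa
    have := hτpos a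
    rwa [hsa.star_eq] at this
  have hσnn : ∀ i, 0 ≤ σ i := fun i => (Complex.nonneg_iff.mp (hsq_nonneg _ (husa i))).1
  have hδnn : ∀ i, 0 ≤ δ i := fun i => (Complex.nonneg_iff.mp (hsq_nonneg _ (hvsa i))).1
  have hτσ : ∀ i, τ (u i * u i) = ((σ i : ℝ) : ℂ) := by
    intro i
    have := (Complex.nonneg_iff.mp (hsq_nonneg _ (husa i))).2
    exact Complex.ext rfl this.symm
  have hτδ : ∀ i, τ (v i * v i) = ((δ i : ℝ) : ℂ) := by
    intro i
    have := (Complex.nonneg_iff.mp (hsq_nonneg _ (hvsa i))).2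
    exact Complex.ext rfl this.symm
  -- independence gives the product formula
  have hProdσ : τ (ordProd R u * ordProd R u) = ((∏ i ∈ R, σ i : ℝ) : ℂ) := by
    rw [hordProd_sq u R humem, hind _ (fun i _ => mul_mem (humem i) (humem i))]
    rw [Complex.ofReal_prod]
    exact Finset.prod_congr rfl fun i _ => hτσ i
  have hProdδ : τ (ordProd R v * ordProd R v) = ((∏ i ∈ R, δ i : ℝ) : ℂ) := by
    rw [hordProd_sq v R hvmem, hind _ (fun i _ => mul_mem (hvmem i) (hvmem i))]
    rw [Complex.ofReal_prod]
    exact Finset.prod_congr rfl fun i _ => hτδ i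
  -- bound for the second factor in Cauchy-Schwarz
  have hsecond : ∀ (b : M), IsSelfAdjoint b → ‖b‖ ≤ 1 → (τ (star b * b)).re ≤ 1 := by
    intro b hbsa hbnorm
    have h1 : (τ (star b * b)).re ≤ ‖star b * b‖ := hτ_le_norm _ (star_mul_self_nonneg b)
    have h2 : ‖star b * b‖ = ‖b‖ * ‖b‖ := CStarRing.norm_star_mul_self
    rw [h2] at h1
    nlinarith [norm_nonneg b]
  -- Cauchy-Schwarz for the two main quantities
  have hCS : ∀ (p b : M), IsSelfAdjoint p → IsSelfAdjoint b → ‖b‖ ≤ 1 →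
      ‖τ (p * b)‖ ^ 2 ≤ (τ (p * p)).re := by
    intro p b hpsa hbsa hbnorm
    have := posMap_cauchy_schwarz τ hτpos p b
    rw [hpsa.star_eq] at this
    have h2 := hsecond b hbsa hbnorm
    have h3 : 0 ≤ (τ (p * p)).re := by
      have := hsq_nonneg p hpsa
      exact (Complex.nonneg_iff.mp this).1
    nlinarith [this, h2, h3]
  have hI2 : ‖τ (ordProd R u * ordProd Rᶜ A0)‖ ^ 2 ≤ ∏ i ∈ R, σ i := by
    have := hCS (ordProd R u) (ordProd Rᶜ A0) hPsa hBsa hnorm_B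
    rwa [hProdσ, Complex.ofReal_re] at this
  have hJ2 : ‖τ (ordProd R v * ordProd Rᶜ A1)‖ ^ 2 ≤ ∏ i ∈ R, δ i := by
    have := hCS (ordProd R v) (ordProd Rᶜ A1) hQsa hCsa hnorm_C
    rwa [hProdδ, Complex.ofReal_re] at this
  -- key per-site bound: σ i + δ i ≤ 4
  have hsum4 : ∀ i, σ i + δ i ≤ 4 := by
    intro i
    have hid : u i * u i + v i * v i = A0 i * A0 i + A0 i * A0 i
        + (A1 i * A1 i + A1 i * A1 i) := by
      simp only [hu, hv]
      noncomm_ring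
    have hτid := congrArg (fun z => z.re) (congrArg τ (hid))
    simp only [map_add, Complex.add_re] at hτid
    have hA0sq : (τ (A0 i * A0 i)).re ≤ 1 := by
      have h1 : (τ (A0 i * A0 i)).re ≤ ‖A0 i * A0 i‖ := by
        have : 0 ≤ A0 i * A0 i := by
          have := star_mul_self_nonneg (A0 i); rwa [(hA0sa i).star_eq] at this
        exact hτ_le_norm _ this
      have h2 : ‖A0 i * A0 i‖ ≤ 1 := by
        have hn := hnorm_le_one _ (hA0sa i) (hA0c i).1 (hA0c i).2
        calc ‖A0 i * A0 i‖ ≤ ‖A0 i‖ * ‖A0 i‖ := norm_mul_le _ _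
          _ ≤ 1 := by nlinarith [norm_nonneg (A0 i)]
      linarith
    have hA1sq : (τ (A1 i * A1 i)).re ≤ 1 := by
      have h1 : (τ (A1 i * A1 i)).re ≤ ‖A1 i * A1 i‖ := by
        have : 0 ≤ A1 i * A1 i := by
          have := star_mul_self_nonneg (A1 i); rwa [(hA1sa i).star_eq] at this
        exact hτ_le_norm _ this
      have h2 : ‖A1 i * A1 i‖ ≤ 1 := by
        have hn := hnorm_le_one _ (hA1sa i) (hA1c i).1 (hA1c i).2
        calc ‖A1 i * A1 i‖ ≤ ‖A1 i‖ * ‖A1 i‖ := norm_mul_le _ _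
          _ ≤ 1 := by nlinarith [norm_nonneg (A1 i)]
      linarith
    have : σ i + δ i = (τ (u i * u i)).re + (τ (v i * v i)).re := rfl
    rw [this, hτid]
    linarith
  -- now pure real analysis
  set a := ‖τ (ordProd R u * ordProd Rᶜ A0)‖ with ha
  set b := ‖τ (ordProd R v * ordProd Rᶜ A1)‖ with hb
  have hann : 0 ≤ a := norm_nonneg _
  have hbnn : 0 ≤ b := norm_nonneg _
  have hh0 : (0 : ℝ) < h := by positivity
  have hhne : (h : ℝ) ≠ 0 := ne_of_gt hh0
  -- a ^ (1/h) ≤ ∑ i in R, (1/h) * (σ i ^ (1/2))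
  have hmain : ∀ (x : ℝ) (f : Fin m → ℝ), 0 ≤ x → (∀ i, 0 ≤ f i) → x ^ 2 ≤ ∏ i ∈ R, f i →
      x ^ (1 / (h : ℝ)) ≤ ∑ i ∈ R, (1 / (h : ℝ)) * (f i ^ (1 / 2 : ℝ)) := by
    intro x f hx hf hx2
    have hprodnn : 0 ≤ ∏ i ∈ R, f i := Finset.prod_nonneg fun i _ => hf i
    have step1 : x ^ (1 / (h : ℝ)) ≤ (∏ i ∈ R, f i) ^ (1 / (2 * (h : ℝ))) := by
      have hxh : x ^ (1 / (h : ℝ)) = (x ^ 2) ^ (1 / (2 * (h : ℝ))) := by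
        rw [← Real.rpow_natCast x 2, ← Real.rpow_mul hx]
        congr 1
        push_cast
        field_simp
      rw [hxh]
      exact Real.rpow_le_rpow (by positivity) hx2 (by positivity)
    have step2 : (∏ i ∈ R, f i) ^ (1 / (2 * (h : ℝ)))
        = ∏ i ∈ R, (f i ^ (1 / 2 : ℝ)) ^ (1 / (h : ℝ)) := by
      rw [← Real.finset_prod_rpow R f (fun i _ => hf i) (1 / (2 * (h : ℝ)))]
      refine Finset.prod_congr rfl fun i _ => ?_
      rw [← Real.rpow_mul (hf i)]
      congr 1
      field_simp
    have step3 : ∏ i ∈ R, (f i ^ (1 / 2 : ℝ)) ^ (1 / (h : ℝ))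
        ≤ ∑ i ∈ R, (1 / (h : ℝ)) * (f i ^ (1 / 2 : ℝ)) := by
      refine Real.geom_mean_le_arith_mean_weighted R (fun _ => 1 / (h : ℝ))
        (fun i => f i ^ (1 / 2 : ℝ)) (fun i _ => by positivity) ?_
        (fun i _ => Real.rpow_nonneg (hf i) _)
      rw [Finset.sum_const, hcard, nsmul_eq_mul]
      field_simp
    calc x ^ (1 / (h : ℝ)) ≤ (∏ i ∈ R, f i) ^ (1 / (2 * (h : ℝ))) := step1
      _ = ∏ i ∈ R, (f i ^ (1 / 2 : ℝ)) ^ (1 / (h : ℝ)) := step2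
      _ ≤ ∑ i ∈ R, (1 / (h : ℝ)) * (f i ^ (1 / 2 : ℝ)) := step3
  have hIa := hmain a σ hann hσnn hI2
  have hJb := hmain b δ hbnn hδnn hJ2
  -- per-site: √σ + √δ ≤ 2√2
  have hsite : ∀ i, σ i ^ (1 / 2 : ℝ) + δ i ^ (1 / 2 : ℝ) ≤ 2 * Real.sqrt 2 := by
    intro i
    rw [← Real.sqrt_eq_rpow, ← Real.sqrt_eq_rpow]
    have h1 := Real.sq_sqrt (hσnn i)
    have h2 := Real.sq_sqrt (hδnn i)
    have h3 : Real.sqrt 2 ^ 2 = 2 := Real.sq_sqrt (by norm_num)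
    have h4 := Real.sqrt_nonneg (σ i)
    have h5 := Real.sqrt_nonneg (δ i)
    have h6 : (0 : ℝ) < Real.sqrt 2 := Real.sqrt_pos.mpr (by norm_num)
    have h7 := hsum4 i
    nlinarith [sq_nonneg (Real.sqrt (σ i) - Real.sqrt (δ i)),
      sq_nonneg (Real.sqrt (σ i) + Real.sqrt (δ i) - 2 * Real.sqrt 2)]
  calc a ^ (1 / (h : ℝ)) + b ^ (1 / (h : ℝ))
      ≤ ∑ i ∈ R, (1 / (h : ℝ)) * (σ i ^ (1 / 2 : ℝ))
        + ∑ i ∈ R, (1 / (h : ℝ)) * (δ i ^ (1 / 2 : ℝ)) := add_le_add hIa hJb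
    _ = ∑ i ∈ R, (1 / (h : ℝ)) * (σ i ^ (1 / 2 : ℝ) + δ i ^ (1 / 2 : ℝ)) := by
        rw [← Finset.sum_add_distrib]
        exact Finset.sum_congr rfl fun i _ => by ring
    _ ≤ ∑ i ∈ R, (1 / (h : ℝ)) * (2 * Real.sqrt 2) := by
        refine Finset.sum_le_sum fun i _ => ?_
        exact mul_le_mul_of_nonneg_left (hsite i) (by positivity)
    _ = 2 * Real.sqrt 2 := by
        rw [Finset.sum_const, hcard, nsmul_eq_mul]
        field_simp
end

section
/- Under the standing hypotheses, if τ is a state on M that is h-independent over R, then 2 ≤ S(τ, M_1, …, M_m) ≤ 2√2, where S(τ, M_1, …, M_m) denotes the supremum of |I_τ|^{1/h} + |J_τ|^{1/h} over all choices of self-adjoint contractions A_{i,0}, A_{i,1} ∈ M_i (i = 1,…,m). -/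
open scoped ComplexOrder

/-- The Bell-type quantity `S(τ, M₁, …, M_m)`: the supremum of
`|I_τ|^{1/h} + |J_τ|^{1/h}` over all choices of self-adjoint contractions
`A_{i,0}, A_{i,1} ∈ M_i`. -/
noncomputable def bellSup {M : Type*} [NormedRing M] [StarRing M] [CStarRing M]
    [CompleteSpace M] [NormedAlgebra ℂ M] [StarModule ℂ M]
    [PartialOrder M] [StarOrderedRing M] {m : ℕ}
    (Msub : Fin m → StarSubalgebra ℂ M) (R : Finset (Fin m)) (h : ℕ)
    (τ : M →ₗ[ℂ] ℂ) : ℝ :=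
  sSup { s : ℝ | ∃ A0 A1 : Fin m → M,
    (∀ i, A0 i ∈ Msub i) ∧ (∀ i, A1 i ∈ Msub i) ∧
    (∀ i, IsSelfAdjoint (A0 i)) ∧ (∀ i, IsSelfAdjoint (A1 i)) ∧
    (∀ i, -1 ≤ A0 i ∧ A0 i ≤ 1) ∧ (∀ i, -1 ≤ A1 i ∧ A1 i ≤ 1) ∧
    s = ‖τ (ordProd R (fun i => A0 i + A1 i) * ordProd Rᶜ A0)‖ ^ (1 / (h : ℝ)) +
        ‖τ (ordProd R (fun i => A0 i - A1 i) * ordProd Rᶜ A1)‖ ^ (1 / (h : ℝ)) }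

section ListLemmas

variable {α : Type*} {M : Type*} [Monoid M]

lemma myList.prod_mul_comm (f g : α → M) :
    ∀ l : List α, l.Nodup → (∀ i ∈ l, ∀ j ∈ l, i ≠ j → Commute (f i) (g j)) →
      (l.map f).prod * (l.map g).prod = (l.map fun i => f i * g i).prod := by
  intro l
  induction l with
  | nil => intro _ _; simp
  | cons a t ih =>
    intro hl hfg
    obtain ⟨hat, ht⟩ := List.nodup_cons.mp hl
    have hcomm : Commute (g a) (t.map f).prod := by
      refine Commute.list_prod_right _ _ fun x hx => ?_
      obtain ⟨j, hj, rfl⟩ := List.mem_map.mp hx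
      exact (hfg j (List.mem_cons_of_mem _ hj) a (List.mem_cons_self)
        (fun hja => hat (hja ▸ hj))).symm
    simp only [List.map_cons, List.prod_cons]
    rw [mul_assoc (f a), ← mul_assoc (t.map f).prod, ← hcomm.eq, mul_assoc (g a),
      ih ht (fun i hi j hj hij =>
        hfg i (List.mem_cons_of_mem _ hi) j (List.mem_cons_of_mem _ hj) hij),
      ← mul_assoc]

lemma myList.prod_star {M : Type*} [Monoid M] [StarMul M] (f : α → M) :
    ∀ l : List α, l.Nodup → (∀ i ∈ l, IsSelfAdjoint (f i)) →
      (∀ i ∈ l, ∀ j ∈ l, i ≠ j → Commute (f i) (f j)) →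
      star (l.map f).prod = (l.map f).prod := by
  intro l
  induction l with
  | nil => intro _ _ _; simp
  | cons a t ih =>
    intro hl hsa hc
    obtain ⟨hat, ht⟩ := List.nodup_cons.mp hl
    have hPa : Commute (f a) (t.map f).prod := by
      refine Commute.list_prod_right _ _ fun x hx => ?_
      obtain ⟨j, hj, rfl⟩ := List.mem_map.mp hx
      exact hc a (List.mem_cons_self) j (List.mem_cons_of_mem _ hj)
        (fun h => hat (h ▸ hj))
    simp only [List.map_cons, List.prod_cons, star_mul]
    rw [ih ht (fun i hi => hsa i (List.mem_cons_of_mem _ hi))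
        (fun i hi j hj hij =>
          hc i (List.mem_cons_of_mem _ hi) j (List.mem_cons_of_mem _ hj) hij),
      (hsa a (List.mem_cons_self)).star_eq, ← hPa.eq]

end ListLemmas

section OrdProdLemmas

variable {M : Type*} {m : ℕ}

lemma ordProd_mul [Monoid M] (s : Finset (Fin m)) (f g : Fin m → M)
    (hc : ∀ i ∈ s, ∀ j ∈ s, i ≠ j → Commute (f i) (g j)) :
    ordProd s f * ordProd s g = ordProd s (fun i => f i * g i) :=
  myList.prod_mul_comm f g _ (s.sort_nodup _)
    (fun i hi j hj hij => hc i (Finset.mem_sort _ |>.mp hi) j (Finset.mem_sort _ |>.mp hj) hij)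

lemma ordProd_star [Monoid M] [StarMul M] (s : Finset (Fin m)) (f : Fin m → M)
    (hsa : ∀ i ∈ s, IsSelfAdjoint (f i))
    (hc : ∀ i ∈ s, ∀ j ∈ s, i ≠ j → Commute (f i) (f j)) :
    star (ordProd s f) = ordProd s f :=
  myList.prod_star f _ (s.sort_nodup _)
    (fun i hi => hsa i (Finset.mem_sort _ |>.mp hi))
    (fun i hi j hj hij => hc i (Finset.mem_sort _ |>.mp hi) j (Finset.mem_sort _ |>.mp hj) hij)

end OrdProdLemmas

section Contraction

variable {α : Type*} {M : Type*} [Ring M] [StarRing M] [PartialOrder M] [StarOrderedRing M]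

lemma myList.star_prod_mul_prod_le_one (A : α → M) :
    ∀ l : List α, (∀ i ∈ l, star (A i) * A i ≤ 1) →
      star (l.map A).prod * (l.map A).prod ≤ 1 := by
  intro l
  induction l with
  | nil => simp
  | cons a t ih =>
    intro h1
    simp only [List.map_cons, List.prod_cons, star_mul]
    calc star (t.map A).prod * star (A a) * (A a * (t.map A).prod)
        = star ((t.map A).prod) * (star (A a) * A a) * (t.map A).prod := by
          simp only [mul_assoc]
      _ ≤ star ((t.map A).prod) * 1 * (t.map A).prod :=
          star_left_conjugate_le_conjugate (h1 a (List.mem_cons_self)) _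
      _ = star ((t.map A).prod) * (t.map A).prod := by rw [mul_one]
      _ ≤ 1 := ih (fun i hi => h1 i (List.mem_cons_of_mem _ hi))

lemma ordProd_star_mul_self_le_one {m : ℕ} (s : Finset (Fin m)) (A : Fin m → M)
    (h1 : ∀ i ∈ s, star (A i) * A i ≤ 1) :
    star (ordProd s A) * ordProd s A ≤ 1 :=
  myList.star_prod_mul_prod_le_one A _ (fun i hi => h1 i (Finset.mem_sort _ |>.mp hi))

end Contraction

section CStarLemmas

variable {M : Type*} [CStarAlgebra M] [PartialOrder M] [StarOrderedRing M]

lemma myAlgebraMap_nonneg {r : ℝ} (hr : 0 ≤ r) : (0 : M) ≤ algebraMap ℝ M r := by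
  have h1 : IsSelfAdjoint (algebraMap ℝ M (Real.sqrt r)) :=
    (IsSelfAdjoint.all _).algebraMap M
  have h2 : algebraMap ℝ M r
      = star (algebraMap ℝ M (Real.sqrt r)) * algebraMap ℝ M (Real.sqrt r) := by
    rw [h1.star_eq, ← map_mul, Real.mul_self_sqrt hr]
  rw [h2]
  exact star_mul_self_nonneg _

lemma myAlgebraMap_mono {r s : ℝ} (hrs : r ≤ s) :
    algebraMap ℝ M r ≤ algebraMap ℝ M s := by
  have h := myAlgebraMap_nonneg (M := M) (sub_nonneg.mpr hrs)
  rw [map_sub] at h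
  exact sub_nonneg.mp h

lemma myNorm_le_one [Nontrivial M] {A : M} (hsa : IsSelfAdjoint A)
    (h1 : -1 ≤ A) (h2 : A ≤ 1) : ‖A‖ ≤ 1 := by
  have hspec1 : ∀ x ∈ spectrum ℝ A, x ≤ 1 :=
    (le_algebraMap_iff_spectrum_le (r := (1 : ℝ)) (a := A) hsa).mp (by simpa using h2)
  have hspec2 : ∀ x ∈ spectrum ℝ A, (-1 : ℝ) ≤ x :=
    (algebraMap_le_iff_le_spectrum (r := (-1 : ℝ)) (a := A) hsa).mp (by simpa using h1)
  rcases CStarAlgebra.norm_or_neg_norm_mem_spectrum hsa with h | h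
  · exact hspec1 _ h
  · have := hspec2 _ h; linarith

lemma myMul_self_le_one [Nontrivial M] {A : M} (hsa : IsSelfAdjoint A)
    (h1 : -1 ≤ A) (h2 : A ≤ 1) : A * A ≤ 1 := by
  have h3 : star A * A ≤ algebraMap ℝ M (‖A‖ ^ 2) :=
    CStarAlgebra.star_mul_le_algebraMap_norm_sq
  rw [hsa.star_eq] at h3
  refine h3.trans ?_
  have h4 : ‖A‖ ^ 2 ≤ 1 := by
    have := myNorm_le_one hsa h1 h2
    nlinarith [norm_nonneg A]
  calc algebraMap ℝ M (‖A‖ ^ 2) ≤ algebraMap ℝ M 1 := myAlgebraMap_mono h4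
    _ = 1 := map_one _

variable (τ : M →ₗ[ℂ] ℂ)

lemma myTau_nonneg (hpos : ∀ a : M, 0 ≤ τ (star a * a)) {z : M} (hz : 0 ≤ z) :
    0 ≤ τ z := by
  have h1 : (0 : M) ≤ CFC.sqrt z := CFC.sqrt_nonneg z
  have h2 : star (CFC.sqrt z) * CFC.sqrt z = z := by
    rw [(IsSelfAdjoint.of_nonneg h1).star_eq, CFC.sqrt_mul_sqrt_self z hz]
  rw [← h2]
  exact hpos _

lemma myTau_mono (hpos : ∀ a : M, 0 ≤ τ (star a * a)) {x y : M} (hxy : x ≤ y) :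
    τ x ≤ τ y := by
  have h := myTau_nonneg τ hpos (sub_nonneg.mpr hxy)
  rw [map_sub] at h
  exact sub_nonneg.mp h

lemma myTau_algebraMap (r : ℝ) : τ (algebraMap ℝ M r) = (r : ℂ) * τ 1 := by
  rw [Algebra.algebraMap_eq_smul_one, LinearMap.map_smul_of_tower, Complex.real_smul]

lemma myTau_im_eq_zero (hpos : ∀ a : M, 0 ≤ τ (star a * a)) {x : M}
    (hsa : IsSelfAdjoint x) : (τ x).im = 0 := by
  have hτ1 : 0 ≤ τ 1 := by simpa using hpos 1
  have hτ1im : (τ 1).im = 0 := ((Complex.nonneg_iff.mp hτ1).2).symm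
  have h0 : (0 : M) ≤ x + algebraMap ℝ M ‖x‖ := by
    have h := hsa.neg_algebraMap_norm_le_self
    have := add_le_add_right h (algebraMap ℝ M ‖x‖)
    rw [add_comm]; simpa using this
  have h1 := myTau_nonneg τ hpos h0
  rw [map_add, myTau_algebraMap] at h1
  have h2 := (Complex.nonneg_iff.mp h1).2
  simp only [Complex.add_im, Complex.mul_im, Complex.ofReal_re, Complex.ofReal_im,
    hτ1im, mul_zero, zero_mul, add_zero, zero_add] at h2
  linarith [h2.symm]

open ComplexStarModule in
lemma myTau_star (hpos : ∀ a : M, 0 ≤ τ (star a * a)) (a : M) :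
    τ (star a) = (starRingEnd ℂ) (τ a) := by
  have hre : (τ (ℜ a : M)).im = 0 := myTau_im_eq_zero τ hpos (ℜ a).property
  have him : (τ (ℑ a : M)).im = 0 := myTau_im_eq_zero τ hpos (ℑ a).property
  have hτa : τ a = τ (ℜ a : M) + Complex.I * τ (ℑ a : M) := by
    conv_lhs => rw [← realPart_add_I_smul_imaginaryPart a]
    rw [map_add, map_smul, smul_eq_mul]
  have hstar : star a = (ℜ a : M) - Complex.I • (ℑ a : M) := by
    conv_lhs => rw [← realPart_add_I_smul_imaginaryPart a]
    rw [star_add, star_smul, (ℜ a).property.star_eq, (ℑ a).property.star_eq,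
      Complex.star_def, Complex.conj_I, neg_smul, ← sub_eq_add_neg]
  rw [hstar, map_sub, map_smul, smul_eq_mul, hτa]
  rw [map_add, map_mul, Complex.conj_I]
  rw [Complex.conj_eq_iff_im.mpr hre, Complex.conj_eq_iff_im.mpr him]
  ring

lemma myComplex_eq_re {z : ℂ} (hz : 0 ≤ z) : z = ((z.re : ℝ) : ℂ) := by
  have h := (Complex.nonneg_iff.mp hz).2
  exact Complex.ext (by simp) (by simp [← h])

end CStarLemmas

section CauchySchwarz

variable {M : Type*} [CStarAlgebra M] [PartialOrder M] [StarOrderedRing M]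
variable (τ : M →ₗ[ℂ] ℂ)

lemma myTau_cs (hpos : ∀ a : M, 0 ≤ τ (star a * a)) (x y : M) :
    ‖τ (star x * y)‖ ^ 2 ≤ (τ (star x * x)).re * (τ (star y * y)).re := by
  set t : ℂ := τ (star x * y) with ht
  set P : ℝ := (τ (star x * x)).re with hP
  set Q : ℝ := (τ (star y * y)).re with hQ
  have hPc : τ (star x * x) = (P : ℂ) := myComplex_eq_re (hpos x)
  have hQc : τ (star y * y) = (Q : ℂ) := myComplex_eq_re (hpos y)
  have hP0 : 0 ≤ P := (Complex.nonneg_iff.mp (hpos x)).1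
  have hQ0 : 0 ≤ Q := (Complex.nonneg_iff.mp (hpos y)).1
  have hyx : τ (star y * x) = (starRingEnd ℂ) t := by
    rw [ht, ← myTau_star τ hpos, star_mul, star_star]
  have habs : ‖t‖ ^ 2 = (t * (starRingEnd ℂ) t).re := by
    rw [Complex.mul_conj, Complex.sq_norm]
    simp
  have hq : ∀ s : ℝ, 0 ≤ (‖t‖ ^ 2 * P) * (s * s)
      + (2 * ‖t‖ ^ 2) * s + Q := by
    intro s
    set c : ℂ := (s : ℂ) * t with hc
    have h0 := hpos (c • x + y)
    have expand : star (c • x + y) * (c • x + y)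
        = ((starRingEnd ℂ) c * c) • (star x * x) + (starRingEnd ℂ) c • (star x * y)
          + c • (star y * x) + star y * y := by
      rw [star_add, star_smul, Complex.star_def]
      simp only [add_mul, mul_add, smul_mul_assoc, mul_smul_comm, smul_smul, smul_add]
      rw [mul_comm c ((starRingEnd ℂ) c)]
      abel
    rw [expand] at h0
    rw [map_add, map_add, map_add, map_smul, map_smul, map_smul] at h0
    rw [hPc, hQc, hyx, ← ht, smul_eq_mul, smul_eq_mul, smul_eq_mul] at h0
    have e1 : (starRingEnd ℂ) c * c * (P : ℂ) + (starRingEnd ℂ) c * t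
        + c * ((starRingEnd ℂ) t) + (Q : ℂ)
        = (((‖t‖ ^ 2 * P) * (s * s) + (2 * ‖t‖ ^ 2) * s + Q : ℝ) : ℂ) := by
      rw [hc]
      rw [map_mul, Complex.conj_ofReal]
      have hconj : (starRingEnd ℂ) t * t = ((‖t‖ ^ 2 : ℝ) : ℂ) := by
        rw [mul_comm, Complex.mul_conj, Complex.sq_norm]
      push_cast at hconj ⊢
      linear_combination ((s : ℂ) * (s : ℂ) * (P : ℂ) + 2 * (s : ℂ)) * hconj
    rw [e1] at h0
    exact Complex.zero_le_real.mp h0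
  have hd := discrim_le_zero hq
  rw [discrim] at hd
  by_cases htz : ‖t‖ = 0
  · rw [htz]
    norm_num
    exact mul_nonneg hP0 hQ0
  · have h4 : 0 < ‖t‖ ^ 2 := by positivity
    nlinarith [hd]

end CauchySchwarz

section Endgame

lemma mySq_le {x y : ℝ} (hx : 0 ≤ x) (hy : 0 ≤ y) (hxy : x ^ 2 ≤ y ^ 2) : x ≤ y := by
  nlinarith

lemma myEndgame {m : ℕ} (R : Finset (Fin m)) (h : ℕ) (hh : h ≠ 0) (hcard : R.card = h)
    (a b : Fin m → ℝ) (ha : ∀ i ∈ R, 0 ≤ a i) (hb : ∀ i ∈ R, 0 ≤ b i)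
    (hab : ∀ i ∈ R, a i + b i ≤ 4) (α β : ℝ) (hα : 0 ≤ α) (hβ : 0 ≤ β)
    (hIa : α ^ 2 ≤ ∏ i ∈ R, a i) (hJb : β ^ 2 ≤ ∏ i ∈ R, b i) :
    α ^ (1 / (h : ℝ)) + β ^ (1 / (h : ℝ)) ≤ 2 * Real.sqrt 2 := by
  have hh' : (0 : ℝ) < h := by
    exact_mod_cast Nat.pos_of_ne_zero hh
  have key : ∀ (γ : ℝ) (u : Fin m → ℝ), 0 ≤ γ → (∀ i ∈ R, 0 ≤ u i) →
      γ ^ 2 ≤ ∏ i ∈ R, (u i) ^ 2 →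
      γ ^ (1 / (h : ℝ)) ≤ ∑ i ∈ R, (1 / (h : ℝ)) * u i := by
    intro γ u hγ hu hle
    have hprodu : 0 ≤ ∏ i ∈ R, u i := Finset.prod_nonneg hu
    have hγle : γ ≤ ∏ i ∈ R, u i := by
      refine mySq_le hγ hprodu ?_
      rwa [Finset.prod_pow] at hle
    calc γ ^ (1 / (h : ℝ)) ≤ (∏ i ∈ R, u i) ^ (1 / (h : ℝ)) :=
          Real.rpow_le_rpow hγ hγle (by positivity)
      _ = ∏ i ∈ R, (u i) ^ (1 / (h : ℝ)) := by
          rw [Real.finset_prod_rpow R u hu]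
      _ ≤ ∑ i ∈ R, (1 / (h : ℝ)) * u i := by
          refine Real.geom_mean_le_arith_mean_weighted R _ u (fun _ _ => by positivity) ?_ hu
          rw [Finset.sum_const, hcard, nsmul_eq_mul]
          field_simp
  have h1 : α ^ (1 / (h : ℝ)) ≤ ∑ i ∈ R, (1 / (h : ℝ)) * Real.sqrt (a i) := by
    refine key α (fun i => Real.sqrt (a i)) hα (fun i _ => Real.sqrt_nonneg _) ?_
    refine hIa.trans (le_of_eq (Finset.prod_congr rfl fun i hi => ?_))
    rw [Real.sq_sqrt (ha i hi)]
  have h2 : β ^ (1 / (h : ℝ)) ≤ ∑ i ∈ R, (1 / (h : ℝ)) * Real.sqrt (b i) := by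
    refine key β (fun i => Real.sqrt (b i)) hβ (fun i _ => Real.sqrt_nonneg _) ?_
    refine hJb.trans (le_of_eq (Finset.prod_congr rfl fun i hi => ?_))
    rw [Real.sq_sqrt (hb i hi)]
  have hpt : ∀ i ∈ R, Real.sqrt (a i) + Real.sqrt (b i) ≤ 2 * Real.sqrt 2 := by
    intro i hi
    refine mySq_le (by positivity) (by positivity) ?_
    have e1 := Real.sq_sqrt (ha i hi)
    have e2 := Real.sq_sqrt (hb i hi)
    have e3 : (2 * Real.sqrt 2) ^ 2 = 8 := by
      rw [mul_pow, Real.sq_sqrt (by norm_num : (0:ℝ) ≤ 2)]; norm_num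
    nlinarith [sq_nonneg (Real.sqrt (a i) - Real.sqrt (b i)), hab i hi,
      Real.sqrt_nonneg (a i), Real.sqrt_nonneg (b i)]
  calc α ^ (1 / (h : ℝ)) + β ^ (1 / (h : ℝ))
      ≤ (∑ i ∈ R, (1 / (h : ℝ)) * Real.sqrt (a i))
        + ∑ i ∈ R, (1 / (h : ℝ)) * Real.sqrt (b i) := add_le_add h1 h2
    _ = ∑ i ∈ R, (1 / (h : ℝ)) * (Real.sqrt (a i) + Real.sqrt (b i)) := by
        rw [← Finset.sum_add_distrib]
        exact Finset.sum_congr rfl fun i _ => by ring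
    _ ≤ ∑ i ∈ R, (1 / (h : ℝ)) * (2 * Real.sqrt 2) := by
        refine Finset.sum_le_sum fun i hi => ?_
        exact mul_le_mul_of_nonneg_left (hpt i hi) (by positivity)
    _ = 2 * Real.sqrt 2 := by
        rw [Finset.sum_const, hcard, nsmul_eq_mul]
        field_simp

end Endgame

theorem bellSup_between_two_and_two_sqrt_two
    {M : Type*} [NormedRing M] [StarRing M] [CStarRing M] [CompleteSpace M]
    [NormedAlgebra ℂ M] [StarModule ℂ M] [PartialOrder M] [StarOrderedRing M]
    {m : ℕ} (hm : 2 ≤ m)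
    (Msub : Fin m → StarSubalgebra ℂ M)
    (hcomm : ∀ i j : Fin m, i ≠ j → ∀ x ∈ Msub i, ∀ y ∈ Msub j, Commute x y)
    (R : Finset (Fin m)) (h : ℕ) (hh : 2 ≤ h) (hcard : R.card = h)
    (τ : M →ₗ[ℂ] ℂ)
    (hτpos : ∀ a : M, 0 ≤ τ (star a * a)) (hτ1 : τ 1 = 1)
    (hind : ∀ x : Fin m → M, (∀ i ∈ R, x i ∈ Msub i) →
      τ (ordProd R x) = ∏ i ∈ R, τ (x i)) :
    2 ≤ bellSup Msub R h τ ∧ bellSup Msub R h τ ≤ 2 * Real.sqrt 2 := by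
  letI : CStarAlgebra M := { }
  have hh0 : h ≠ 0 := by omega
  have hhR : (h : ℝ) ≠ 0 := by exact_mod_cast hh0
  have hnt : Nontrivial M := by
    rcases subsingleton_or_nontrivial M with hs | hn
    · exfalso
      have h10 : (1 : M) = 0 := Subsingleton.elim _ _
      rw [h10, map_zero] at hτ1
      exact one_ne_zero hτ1.symm
    · exact hn
  -- upper bound for all elements of the set
  have hub : ∀ s : ℝ, (∃ A0 A1 : Fin m → M,
      (∀ i, A0 i ∈ Msub i) ∧ (∀ i, A1 i ∈ Msub i) ∧
      (∀ i, IsSelfAdjoint (A0 i)) ∧ (∀ i, IsSelfAdjoint (A1 i)) ∧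
      (∀ i, -1 ≤ A0 i ∧ A0 i ≤ 1) ∧ (∀ i, -1 ≤ A1 i ∧ A1 i ≤ 1) ∧
      s = ‖τ (ordProd R (fun i => A0 i + A1 i) * ordProd Rᶜ A0)‖ ^ (1 / (h : ℝ)) +
          ‖τ (ordProd R (fun i => A0 i - A1 i) * ordProd Rᶜ A1)‖ ^ (1 / (h : ℝ)))
      → s ≤ 2 * Real.sqrt 2 := by
    rintro s ⟨A0, A1, h0m, h1m, h0sa, h1sa, h0c, h1c, rfl⟩
    set f : Fin m → M := fun i => A0 i + A1 i with hf
    set g : Fin m → M := fun i => A0 i - A1 i with hg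
    have hfm : ∀ i, f i ∈ Msub i := fun i => add_mem (h0m i) (h1m i)
    have hgm : ∀ i, g i ∈ Msub i := fun i => sub_mem (h0m i) (h1m i)
    have hfsa : ∀ i, IsSelfAdjoint (f i) := fun i => (h0sa i).add (h1sa i)
    have hgsa : ∀ i, IsSelfAdjoint (g i) := fun i => (h0sa i).sub (h1sa i)
    have hcf : ∀ i ∈ R, ∀ j ∈ R, i ≠ j → Commute (f i) (f j) :=
      fun i _ j _ hij => hcomm i j hij _ (hfm i) _ (hfm j)
    have hcg : ∀ i ∈ R, ∀ j ∈ R, i ≠ j → Commute (g i) (g j) :=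
      fun i _ j _ hij => hcomm i j hij _ (hgm i) _ (hgm j)
    have h0sq : ∀ i, A0 i * A0 i ≤ 1 :=
      fun i => myMul_self_le_one (h0sa i) (h0c i).1 (h0c i).2
    have h1sq : ∀ i, A1 i * A1 i ≤ 1 :=
      fun i => myMul_self_le_one (h1sa i) (h1c i).1 (h1c i).2
    set a : Fin m → ℝ := fun i => (τ (f i * f i)).re with ha
    set b : Fin m → ℝ := fun i => (τ (g i * g i)).re with hb
    have hfτ : ∀ i, τ (f i * f i) = ((a i : ℝ) : ℂ) ∧ 0 ≤ a i := by
      intro i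
      have hp := hτpos (f i)
      rw [(hfsa i).star_eq] at hp
      exact ⟨myComplex_eq_re hp, (Complex.nonneg_iff.mp hp).1⟩
    have hgτ : ∀ i, τ (g i * g i) = ((b i : ℝ) : ℂ) ∧ 0 ≤ b i := by
      intro i
      have hp := hτpos (g i)
      rw [(hgsa i).star_eq] at hp
      exact ⟨myComplex_eq_re hp, (Complex.nonneg_iff.mp hp).1⟩
    have hab : ∀ i ∈ R, a i + b i ≤ 4 := by
      intro i _
      have hle : f i * f i + g i * g i ≤ ((1 : M) + 1) + (1 + 1) := by
        have he : f i * f i + g i * g i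
            = (A0 i * A0 i + A0 i * A0 i) + (A1 i * A1 i + A1 i * A1 i) := by
          simp only [hf, hg]
          noncomm_ring
        rw [he]
        exact add_le_add (add_le_add (h0sq i) (h0sq i)) (add_le_add (h1sq i) (h1sq i))
      have ht := myTau_mono τ hτpos hle
      rw [map_add, (hfτ i).1, (hgτ i).1] at ht
      have h4 : τ (((1 : M) + 1) + (1 + 1)) = ((4 : ℝ) : ℂ) := by
        rw [map_add, map_add, hτ1]
        norm_num
      rw [h4, ← Complex.ofReal_add] at ht
      exact Complex.real_le_real.mp ht
    have hIbound : ∀ (u : Fin m → M) (c : Fin m → ℝ) (B : Fin m → M),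
        (∀ i, u i ∈ Msub i) → (∀ i, IsSelfAdjoint (u i)) →
        (∀ i, τ (u i * u i) = ((c i : ℝ) : ℂ) ∧ 0 ≤ c i) →
        (∀ i, IsSelfAdjoint (B i)) → (∀ i, B i * B i ≤ 1) →
        ‖τ (ordProd R u * ordProd Rᶜ B)‖ ^ 2 ≤ ∏ i ∈ R, c i := by
      intro u c B hum husa hcτ hBsa hBsq
      have hcu : ∀ i ∈ R, ∀ j ∈ R, i ≠ j → Commute (u i) (u j) :=
        fun i _ j _ hij => hcomm i j hij _ (hum i) _ (hum j)
      have hPstar : star (ordProd R u) = ordProd R u :=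
        ordProd_star R u (fun i _ => husa i) hcu
      have hcs := myTau_cs τ hτpos (ordProd R u) (ordProd Rᶜ B)
      rw [hPstar] at hcs
      have hPP : ordProd R u * ordProd R u = ordProd R (fun i => u i * u i) :=
        ordProd_mul R u u hcu
      have hPPval : τ (ordProd R u * ordProd R u) = ((∏ i ∈ R, c i : ℝ) : ℂ) := by
        rw [hPP, hind _ (fun i _ => mul_mem (hum i) (hum i)),
          Finset.prod_congr rfl (fun i _ => (hcτ i).1), ← Complex.ofReal_prod]
      have hCle : (τ (star (ordProd Rᶜ B) * ordProd Rᶜ B)).re ≤ 1 := by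
        have hC1 : star (ordProd Rᶜ B) * ordProd Rᶜ B ≤ 1 :=
          ordProd_star_mul_self_le_one Rᶜ B (fun i _ => by
            rw [(hBsa i).star_eq]; exact hBsq i)
        have hmono := myTau_mono τ hτpos hC1
        rw [hτ1] at hmono
        simpa using (Complex.le_def.mp hmono).1
      have hC0 : 0 ≤ (τ (star (ordProd Rᶜ B) * ordProd Rᶜ B)).re :=
        (Complex.nonneg_iff.mp (hτpos _)).1
      have hprodnn : (0 : ℝ) ≤ ∏ i ∈ R, c i :=
        Finset.prod_nonneg (fun i _ => (hcτ i).2)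
      calc ‖τ (ordProd R u * ordProd Rᶜ B)‖ ^ 2
          ≤ (τ (ordProd R u * ordProd R u)).re
            * (τ (star (ordProd Rᶜ B) * ordProd Rᶜ B)).re := hcs
        _ = (∏ i ∈ R, c i) * (τ (star (ordProd Rᶜ B) * ordProd Rᶜ B)).re := by
            rw [hPPval, Complex.ofReal_re]
        _ ≤ (∏ i ∈ R, c i) * 1 := mul_le_mul_of_nonneg_left hCle hprodnn
        _ = ∏ i ∈ R, c i := mul_one _
    have hI := hIbound f a A0 hfm hfsa hfτ h0sa h0sq
    have hJ := hIbound g b A1 hgm hgsa hgτ h1sa h1sq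
    exact myEndgame R h hh0 hcard a b (fun i _ => (hfτ i).2) (fun i _ => (hgτ i).2)
      hab _ _ (norm_nonneg _) (norm_nonneg _) hI hJ
  -- the witness giving value 2
  have h01 : (0 : M) ≤ 1 := by simpa using star_mul_self_nonneg (1 : M)
  have hneg : (-1 : M) ≤ 1 := neg_le_self h01
  have hmem : ∃ A0 A1 : Fin m → M,
      (∀ i, A0 i ∈ Msub i) ∧ (∀ i, A1 i ∈ Msub i) ∧
      (∀ i, IsSelfAdjoint (A0 i)) ∧ (∀ i, IsSelfAdjoint (A1 i)) ∧
      (∀ i, -1 ≤ A0 i ∧ A0 i ≤ 1) ∧ (∀ i, -1 ≤ A1 i ∧ A1 i ≤ 1) ∧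
      (2 : ℝ) = ‖τ (ordProd R (fun i => A0 i + A1 i) * ordProd Rᶜ A0)‖ ^ (1 / (h : ℝ)) +
          ‖τ (ordProd R (fun i => A0 i - A1 i) * ordProd Rᶜ A1)‖ ^ (1 / (h : ℝ)) := by
    refine ⟨fun _ => 1, fun _ => 1, fun i => one_mem _, fun i => one_mem _,
      fun i => IsSelfAdjoint.one M, fun i => IsSelfAdjoint.one M,
      fun i => ⟨hneg, le_refl _⟩, fun i => ⟨hneg, le_refl _⟩, ?_⟩
    have hOne : ordProd Rᶜ (fun _ : Fin m => (1 : M)) = 1 := by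
      unfold ordProd
      simp
    have hTwo : ordProd R (fun _ : Fin m => (1 : M) + 1) = (2 : M) ^ h := by
      unfold ordProd
      simp [List.map_const', List.prod_replicate, Finset.length_sort, hcard,
        one_add_one_eq_two]
    have hZero : ordProd R (fun _ : Fin m => (1 : M) - 1) = 0 := by
      unfold ordProd
      simp [List.map_const', List.prod_replicate, Finset.length_sort, hcard,
        sub_self, zero_pow hh0]
    have h2M : (2 : M) = (2 : ℂ) • (1 : M) := by
      rw [two_smul, one_add_one_eq_two]
    have hτ2 : τ ((2 : M) ^ h * 1) = (2 : ℂ) ^ h := by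
      rw [mul_one, h2M, smul_pow, one_pow, map_smul, hτ1, smul_eq_mul, mul_one]
    have habs2 : ‖(2 : ℂ) ^ h‖ = (2 : ℝ) ^ h := by
      rw [norm_pow, Complex.norm_two]
    have hrpow : ((2 : ℝ) ^ h) ^ (1 / (h : ℝ)) = 2 := by
      rw [← Real.rpow_natCast 2 h, ← Real.rpow_mul (by norm_num), mul_one_div,
        div_self hhR, Real.rpow_one]
    beta_reduce
    rw [show (fun i : Fin m => (1 : M) + 1) = (fun _ : Fin m => (1 : M) + 1) from rfl]
    rw [hTwo, hZero, hOne, hτ2, zero_mul, map_zero, norm_zero, habs2, hrpow,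
      Real.zero_rpow (one_div_ne_zero hhR), add_zero]
  constructor
  · exact le_csSup ⟨2 * Real.sqrt 2, fun s hs => hub s hs⟩ hmem
  · exact csSup_le ⟨2, hmem⟩ (fun s hs => hub s hs)
end

section
/- Under the standing hypotheses, if τ is a state on M that is h-independent over R, then τ( ∏_{i∈R} (A_{i,0}+A_{i,1})² )^{1/h} + τ( ∏_{i∈R} (A_{i,0}−A_{i,1})² )^{1/h} ≤ 4. -/
open scoped ComplexOrder

lemma sq_le_one' {A : Type*} [CStarAlgebra A] [PartialOrder A] [StarOrderedRing A]
    {a : A} (h1 : -1 ≤ a) (h2 : a ≤ 1) : a ^ 2 ≤ 1 := by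
  have h1' : (0 : A) ≤ 1 + a := by simpa [add_comm] using add_le_add_left h1 1
  have h2' : (0 : A) ≤ 1 - a := sub_nonneg.mpr h2
  set s := CFC.sqrt (1 + a) with hs_def
  have hs : (0 : A) ≤ s := CFC.sqrt_nonneg _
  have hss : s * s = 1 + a := CFC.sqrt_mul_sqrt_self _ h1'
  have hcomm : Commute (1 + a) s := by
    rw [← hss]; exact (Commute.refl s).mul_left (Commute.refl s)
  have hcomm' : Commute (1 - a) s := by
    have ha : Commute a s := by
      simpa using hcomm.sub_left (Commute.one_left s)
    exact (Commute.one_left s).sub_left ha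
  have key : 0 ≤ star s * (1 - a) * s := star_left_conjugate_nonneg h2' s
  rw [(IsSelfAdjoint.of_nonneg hs).star_eq] at key
  have : s * (1 - a) * s = 1 - a ^ 2 := by
    rw [← hcomm'.eq, mul_assoc, hss]; noncomm_ring
  rw [this] at key
  exact sub_nonneg.mp key

lemma tau_nonneg' {M : Type*} [NonUnitalRing M] [StarRing M] [PartialOrder M]
    [StarOrderedRing M] [Module ℂ M] (τ : M →ₗ[ℂ] ℂ)
    (hτpos : ∀ a : M, 0 ≤ τ (star a * a)) {x : M} (hx : 0 ≤ x) : 0 ≤ τ x := by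
  rw [StarOrderedRing.nonneg_iff] at hx
  induction hx using AddSubmonoid.closure_induction with
  | mem y hy => obtain ⟨s, rfl⟩ := hy; exact hτpos s
  | zero => simp
  | add y z _ _ hy hz => rw [map_add]; exact add_nonneg hy hz

lemma mahler4 {ι : Type*} (R : Finset ι) (h : ℕ) (hh : 2 ≤ h) (hcard : R.card = h)
    (a b : ι → ℝ) (ha : ∀ i ∈ R, 0 ≤ a i) (hb : ∀ i ∈ R, 0 ≤ b i)
    (hab : ∀ i ∈ R, a i + b i ≤ 4) :
    (∏ i ∈ R, a i) ^ (1 / (h : ℝ)) + (∏ i ∈ R, b i) ^ (1 / (h : ℝ)) ≤ 4 := by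
  have hh0 : (0 : ℝ) < h := by positivity
  have hr : (0 : ℝ) < 1 / h := by positivity
  have hw : ∑ _i ∈ R, (1 / (h : ℝ)) = 1 := by
    rw [Finset.sum_const, hcard, nsmul_eq_mul, mul_one_div, div_self hh0.ne']
  have key : ∀ c : ι → ℝ, (∀ i ∈ R, 0 ≤ c i) →
      (∏ i ∈ R, c i) ^ (1 / (h : ℝ)) ≤ 4 * ∑ i ∈ R, (1 / (h : ℝ)) * (c i / 4) := by
    intro c hc
    have h1 : (∏ i ∈ R, (c i / 4)) ^ (1 / (h : ℝ)) ≤ ∑ i ∈ R, (1 / (h : ℝ)) * (c i / 4) := by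
      rw [← Real.finset_prod_rpow R _ (fun i hi => div_nonneg (hc i hi) (by norm_num)) _]
      exact Real.geom_mean_le_arith_mean_weighted R _ _ (fun i _ => le_of_lt hr) hw
        (fun i hi => div_nonneg (hc i hi) (by norm_num))
    have h2 : (∏ i ∈ R, (c i / 4)) ^ (1 / (h : ℝ))
        = (∏ i ∈ R, c i) ^ (1 / (h : ℝ)) / 4 := by
      rw [Finset.prod_div_distrib, Finset.prod_const, hcard,
        Real.div_rpow (Finset.prod_nonneg hc) (by positivity),
        ← Real.rpow_natCast (4:ℝ) h, ← Real.rpow_mul (by norm_num),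
        mul_one_div, div_self hh0.ne', Real.rpow_one]
    rw [h2] at h1
    linarith
  have ka := key a ha
  have kb := key b hb
  have hsum : (∑ i ∈ R, (1 / (h : ℝ)) * (a i / 4)) + ∑ i ∈ R, (1 / (h : ℝ)) * (b i / 4) ≤ 1 := by
    have hstep : ∀ i ∈ R, 1 / (h : ℝ) * (a i / 4) + 1 / (h : ℝ) * (b i / 4)
        ≤ 1 / (h : ℝ) * 1 := by
      intro i hi
      rw [← mul_add]
      exact mul_le_mul_of_nonneg_left (by linarith [hab i hi]) hr.le
    calc (∑ i ∈ R, (1 / (h : ℝ)) * (a i / 4)) + ∑ i ∈ R, (1 / (h : ℝ)) * (b i / 4)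
        = ∑ i ∈ R, (1 / (h : ℝ) * (a i / 4) + 1 / (h : ℝ) * (b i / 4)) :=
          Finset.sum_add_distrib.symm
      _ ≤ ∑ _i ∈ R, 1 / (h : ℝ) * 1 := Finset.sum_le_sum hstep
      _ = 1 := by simpa using hw
  linarith

theorem sum_of_rpow_products_le_four
    {M : Type*} [NormedRing M] [StarRing M] [CStarRing M] [CompleteSpace M]
    [NormedAlgebra ℂ M] [StarModule ℂ M] [PartialOrder M] [StarOrderedRing M]
    {m : ℕ} (hm : 2 ≤ m)
    (Msub : Fin m → StarSubalgebra ℂ M)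
    (hcomm : ∀ i j : Fin m, i ≠ j → ∀ x ∈ Msub i, ∀ y ∈ Msub j, Commute x y)
    (A0 A1 : Fin m → M)
    (hA0mem : ∀ i, A0 i ∈ Msub i) (hA1mem : ∀ i, A1 i ∈ Msub i)
    (hA0sa : ∀ i, IsSelfAdjoint (A0 i)) (hA1sa : ∀ i, IsSelfAdjoint (A1 i))
    (hA0c : ∀ i, -1 ≤ A0 i ∧ A0 i ≤ 1) (hA1c : ∀ i, -1 ≤ A1 i ∧ A1 i ≤ 1)
    (R : Finset (Fin m)) (h : ℕ) (hh : 2 ≤ h) (hcard : R.card = h)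
    (τ : M →ₗ[ℂ] ℂ)
    (hτpos : ∀ a : M, 0 ≤ τ (star a * a)) (hτ1 : τ 1 = 1)
    (hind : ∀ x : Fin m → M, (∀ i ∈ R, x i ∈ Msub i) →
      τ (ordProd R x) = ∏ i ∈ R, τ (x i)) :
    (τ (ordProd R (fun i => (A0 i + A1 i) ^ 2))).re ^ (1 / (h : ℝ)) +
      (τ (ordProd R (fun i => (A0 i - A1 i) ^ 2))).re ^ (1 / (h : ℝ)) ≤ 4 := by
  letI : CStarAlgebra M := {}
  -- notation
  set P : Fin m → M := fun i => (A0 i + A1 i) ^ 2 with hP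
  set Q : Fin m → M := fun i => (A0 i - A1 i) ^ 2 with hQ
  -- positivity of squares of self-adjoint elements
  have sq_nonneg' : ∀ x : M, IsSelfAdjoint x → (0 : M) ≤ x ^ 2 := by
    intro x hx
    rw [sq]
    nth_rewrite 1 [← hx.star_eq]
    exact star_mul_self_nonneg x
  have hPpos : ∀ i, (0 : ℂ) ≤ τ (P i) := fun i =>
    tau_nonneg' τ hτpos (sq_nonneg' _ ((hA0sa i).add (hA1sa i)))
  have hQpos : ∀ i, (0 : ℂ) ≤ τ (Q i) := fun i =>
    tau_nonneg' τ hτpos (sq_nonneg' _ ((hA0sa i).sub (hA1sa i)))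
  -- real values
  have hPre : ∀ i, τ (P i) = ((τ (P i)).re : ℂ) := by
    intro i
    have him := (Complex.nonneg_iff.mp (hPpos i)).2
    exact ((Complex.ext (by simp) (by simp [← him])) :
      (((τ (P i)).re : ℝ) : ℂ) = τ (P i)).symm
  have hQre : ∀ i, τ (Q i) = ((τ (Q i)).re : ℂ) := by
    intro i
    have him := (Complex.nonneg_iff.mp (hQpos i)).2
    exact ((Complex.ext (by simp) (by simp [← him])) :
      (((τ (Q i)).re : ℝ) : ℂ) = τ (Q i)).symm
  -- τ is monotone
  have hmono : ∀ x y : M, x ≤ y → τ x ≤ τ y := by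
    intro x y hxy
    have h0 := tau_nonneg' τ hτpos (sub_nonneg.mpr hxy)
    rw [map_sub] at h0
    exact sub_nonneg.mp h0
  -- pointwise bound
  have hbound : ∀ i, (τ (P i)).re + (τ (Q i)).re ≤ 4 := by
    intro i
    have h0 : τ ((A0 i) ^ 2) ≤ 1 := by
      have := hmono _ _ (sq_le_one' (hA0c i).1 (hA0c i).2)
      rwa [hτ1] at this
    have h1 : τ ((A1 i) ^ 2) ≤ 1 := by
      have := hmono _ _ (sq_le_one' (hA1c i).1 (hA1c i).2)
      rwa [hτ1] at this
    have hPQ : P i + Q i = (A0 i) ^ 2 + (A0 i) ^ 2 + ((A1 i) ^ 2 + (A1 i) ^ 2) := by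
      simp only [hP, hQ]
      noncomm_ring
    have hsum : τ (P i) + τ (Q i)
        = τ ((A0 i) ^ 2) + τ ((A0 i) ^ 2) + (τ ((A1 i) ^ 2) + τ ((A1 i) ^ 2)) := by
      rw [← map_add, hPQ]
      simp [map_add]
    have e := congrArg Complex.re hsum
    simp only [Complex.add_re] at e
    have r0 : (τ ((A0 i) ^ 2)).re ≤ 1 := by
      have := (Complex.le_def.mp h0).1
      simpa using this
    have r1 : (τ ((A1 i) ^ 2)).re ≤ 1 := by
      have := (Complex.le_def.mp h1).1
      simpa using this
    linarith
  -- memberships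
  have hPmem : ∀ i ∈ R, P i ∈ Msub i := fun i _ =>
    pow_mem (add_mem (hA0mem i) (hA1mem i)) 2
  have hQmem : ∀ i ∈ R, Q i ∈ Msub i := fun i _ =>
    pow_mem (sub_mem (hA0mem i) (hA1mem i)) 2
  -- rewrite the products via independence
  have eP : (τ (ordProd R P)).re = ∏ i ∈ R, (τ (P i)).re := by
    rw [hind P hPmem]
    have : ∏ i ∈ R, τ (P i) = ((∏ i ∈ R, (τ (P i)).re : ℝ) : ℂ) := by
      rw [Complex.ofReal_prod]
      exact Finset.prod_congr rfl fun i _ => hPre i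
    rw [this, Complex.ofReal_re]
  have eQ : (τ (ordProd R Q)).re = ∏ i ∈ R, (τ (Q i)).re := by
    rw [hind Q hQmem]
    have : ∏ i ∈ R, τ (Q i) = ((∏ i ∈ R, (τ (Q i)).re : ℝ) : ℂ) := by
      rw [Complex.ofReal_prod]
      exact Finset.prod_congr rfl fun i _ => hQre i
    rw [this, Complex.ofReal_re]
  rw [eP, eQ]
  exact mahler4 R h hh hcard _ _
    (fun i _ => (Complex.nonneg_iff.mp (hPpos i)).1)
    (fun i _ => (Complex.nonneg_iff.mp (hQpos i)).1)
    (fun i _ => hbound i)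
end

section
/- Under the standing hypotheses, if τ is a state on M that is h-independent over R, then 2 · τ( ∏_{i∈R} (A_{i,0}+A_{i,1})² )^{1/(2h)} · τ( ∏_{i∈R} (A_{i,0}−A_{i,1})² )^{1/(2h)} ≤ 4. -/
open scoped ComplexOrder

theorem twice_product_of_rpow_products_le_four
    {M : Type*} [NormedRing M] [StarRing M] [CStarRing M] [CompleteSpace M]
    [NormedAlgebra ℂ M] [StarModule ℂ M] [PartialOrder M] [StarOrderedRing M]
    {m : ℕ} (hm : 2 ≤ m)
    (Msub : Fin m → StarSubalgebra ℂ M)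
    (hcomm : ∀ i j : Fin m, i ≠ j → ∀ x ∈ Msub i, ∀ y ∈ Msub j, Commute x y)
    (A0 A1 : Fin m → M)
    (hA0mem : ∀ i, A0 i ∈ Msub i) (hA1mem : ∀ i, A1 i ∈ Msub i)
    (hA0sa : ∀ i, IsSelfAdjoint (A0 i)) (hA1sa : ∀ i, IsSelfAdjoint (A1 i))
    (hA0c : ∀ i, -1 ≤ A0 i ∧ A0 i ≤ 1) (hA1c : ∀ i, -1 ≤ A1 i ∧ A1 i ≤ 1)
    (R : Finset (Fin m)) (h : ℕ) (hh : 2 ≤ h) (hcard : R.card = h)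
    (τ : M →ₗ[ℂ] ℂ)
    (hτpos : ∀ a : M, 0 ≤ τ (star a * a)) (hτ1 : τ 1 = 1)
    (hind : ∀ x : Fin m → M, (∀ i ∈ R, x i ∈ Msub i) →
      τ (ordProd R x) = ∏ i ∈ R, τ (x i)) :
    2 * (τ (ordProd R (fun i => (A0 i + A1 i) ^ 2))).re ^ (1 / (2 * (h : ℝ))) *
      (τ (ordProd R (fun i => (A0 i - A1 i) ^ 2))).re ^ (1 / (2 * (h : ℝ))) ≤ 4 := by
  letI : CStarAlgebra M := ⟨⟩
  haveI : Nontrivial M := by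
    by_contra hc
    rw [not_nontrivial_iff_subsingleton] at hc
    have h10 : (1 : M) = 0 := Subsingleton.elim _ _
    rw [h10, map_zero] at hτ1
    exact one_ne_zero hτ1.symm
  -- τ is nonnegative on nonnegative elements
  have hτnn : ∀ a : M, 0 ≤ a → 0 ≤ τ a := by
    intro a ha
    rw [StarOrderedRing.nonneg_iff] at ha
    induction ha using AddSubmonoid.closure_induction with
    | mem x hx => obtain ⟨s, rfl⟩ := hx; exact hτpos s
    | zero => simp
    | add x y _ _ hx hy => rw [map_add]; exact add_nonneg hx hy
  have hmono : ∀ a b : M, a ≤ b → (τ a).re ≤ (τ b).re := by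
    intro a b hab
    have h0 := hτnn _ (sub_nonneg.mpr hab)
    rw [map_sub, Complex.nonneg_iff] at h0
    have h1 := h0.1
    simp only [Complex.sub_re] at h1
    linarith
  -- squares of self-adjoint contractions are ≤ 1
  have hsq1 : ∀ a : M, IsSelfAdjoint a → -1 ≤ a → a ≤ 1 → a ^ 2 ≤ 1 := by
    intro a hsa hm1 h1
    have hna : ‖a‖ ≤ 1 := by
      rcases CStarAlgebra.norm_or_neg_norm_mem_spectrum (a := a) hsa with hx | hx
      · have h2 : a ≤ algebraMap ℝ M 1 := by rwa [map_one]
        exact (le_algebraMap_iff_spectrum_le hsa).mp h2 _ hx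
      · have h2 : algebraMap ℝ M (-1) ≤ a := by rwa [map_neg, map_one]
        have := (algebraMap_le_iff_le_spectrum hsa).mp h2 _ hx
        linarith
    have h3 : star a * a ≤ algebraMap ℝ M (‖a‖ ^ 2) :=
      CStarAlgebra.star_mul_le_algebraMap_norm_sq
    have h4 : algebraMap ℝ M (‖a‖ ^ 2) ≤ 1 := by
      have hr : (0:ℝ) ≤ 1 - ‖a‖ ^ 2 := by nlinarith [norm_nonneg a]
      have h5 : (0:M) ≤ algebraMap ℝ M (1 - ‖a‖ ^ 2) := by
        have heq : algebraMap ℝ M (1 - ‖a‖ ^ 2)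
            = star (algebraMap ℝ M (Real.sqrt (1 - ‖a‖ ^ 2)))
              * algebraMap ℝ M (Real.sqrt (1 - ‖a‖ ^ 2)) := by
          rw [← algebraMap_star_comm, star_trivial, ← map_mul, Real.mul_self_sqrt hr]
        rw [heq]
        exact star_mul_self_nonneg _
      have h6 : algebraMap ℝ M (‖a‖ ^ 2) ≤ algebraMap ℝ M 1 := by
        rw [← sub_nonneg, ← map_sub]
        exact h5
      rwa [map_one] at h6
    calc a ^ 2 = star a * a := by rw [hsa.star_eq, sq]
      _ ≤ _ := h3.trans h4
  -- notation
  set P : Fin m → M := fun i => (A0 i + A1 i) ^ 2 with hP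
  set Q : Fin m → M := fun i => (A0 i - A1 i) ^ 2 with hQ
  have hPpos : ∀ i, 0 ≤ τ (P i) := by
    intro i
    have heq : P i = star (A0 i + A1 i) * (A0 i + A1 i) := by
      show (A0 i + A1 i) ^ 2 = _
      rw [((hA0sa i).add (hA1sa i)).star_eq, sq]
    rw [heq]; exact hτpos _
  have hQpos : ∀ i, 0 ≤ τ (Q i) := by
    intro i
    have heq : Q i = star (A0 i - A1 i) * (A0 i - A1 i) := by
      show (A0 i - A1 i) ^ 2 = _
      rw [((hA0sa i).sub (hA1sa i)).star_eq, sq]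
    rw [heq]; exact hτpos _
  have hPre : ∀ i, τ (P i) = ((τ (P i)).re : ℂ) := by
    intro i
    have := (Complex.nonneg_iff.mp (hPpos i)).2
    exact Complex.ext rfl (by simp [← this])
  have hQre : ∀ i, τ (Q i) = ((τ (Q i)).re : ℂ) := by
    intro i
    have := (Complex.nonneg_iff.mp (hQpos i)).2
    exact Complex.ext rfl (by simp [← this])
  have hPnn : ∀ i, 0 ≤ (τ (P i)).re := fun i => (Complex.nonneg_iff.mp (hPpos i)).1
  have hQnn : ∀ i, 0 ≤ (τ (Q i)).re := fun i => (Complex.nonneg_iff.mp (hQpos i)).1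
  -- sum bound
  have hPQ4 : ∀ i, (τ (P i)).re + (τ (Q i)).re ≤ 4 := by
    intro i
    have hle : P i + Q i ≤ 1 + 1 + 1 + 1 := by
      have heq : P i + Q i = (A0 i) ^ 2 + (A0 i) ^ 2 + ((A1 i) ^ 2 + (A1 i) ^ 2) := by
        show (A0 i + A1 i) ^ 2 + (A0 i - A1 i) ^ 2 = _
        noncomm_ring
      rw [heq]
      have h0 := hsq1 (A0 i) (hA0sa i) (hA0c i).1 (hA0c i).2
      have h1 := hsq1 (A1 i) (hA1sa i) (hA1c i).1 (hA1c i).2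
      calc (A0 i) ^ 2 + (A0 i) ^ 2 + ((A1 i) ^ 2 + (A1 i) ^ 2)
          ≤ 1 + 1 + (1 + 1) := add_le_add (add_le_add h0 h0) (add_le_add h1 h1)
        _ = 1 + 1 + 1 + 1 := by rw [← add_assoc]
    have hm' := hmono _ _ hle
    have h4' : τ (1 + 1 + 1 + 1 : M) = 4 := by
      rw [map_add, map_add, map_add, hτ1]; norm_num
    rw [h4', map_add] at hm'
    simp only [Complex.add_re] at hm'
    simpa using hm'
  -- memberships
  have hPmem : ∀ i ∈ R, P i ∈ Msub i := fun i _ =>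
    pow_mem (add_mem (hA0mem i) (hA1mem i)) 2
  have hQmem : ∀ i ∈ R, Q i ∈ Msub i := fun i _ =>
    pow_mem (sub_mem (hA0mem i) (hA1mem i)) 2
  -- products
  set X : ℝ := ∏ i ∈ R, (τ (P i)).re with hXdef
  set Y : ℝ := ∏ i ∈ R, (τ (Q i)).re with hYdef
  have hXeq : (τ (ordProd R P)).re = X := by
    rw [hind P hPmem, hXdef]
    rw [show (∏ i ∈ R, τ (P i)) = ((∏ i ∈ R, (τ (P i)).re : ℝ) : ℂ) by
      rw [Complex.ofReal_prod]; exact Finset.prod_congr rfl fun i _ => hPre i]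
    exact Complex.ofReal_re _
  have hYeq : (τ (ordProd R Q)).re = Y := by
    rw [hind Q hQmem, hYdef]
    rw [show (∏ i ∈ R, τ (Q i)) = ((∏ i ∈ R, (τ (Q i)).re : ℝ) : ℂ) by
      rw [Complex.ofReal_prod]; exact Finset.prod_congr rfl fun i _ => hQre i]
    exact Complex.ofReal_re _
  have hXnn : 0 ≤ X := Finset.prod_nonneg fun i _ => hPnn i
  have hYnn : 0 ≤ Y := Finset.prod_nonneg fun i _ => hQnn i
  have hXY : X * Y ≤ 4 ^ h := by
    rw [hXdef, hYdef, ← Finset.prod_mul_distrib, ← hcard]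
    calc (∏ i ∈ R, (τ (P i)).re * (τ (Q i)).re)
        ≤ ∏ i ∈ R, (4:ℝ) := by
          refine Finset.prod_le_prod (fun i _ => mul_nonneg (hPnn i) (hQnn i))
            (fun i _ => ?_)
          nlinarith [hPnn i, hQnn i, hPQ4 i, sq_nonneg ((τ (P i)).re - (τ (Q i)).re),
            sq_nonneg ((τ (P i)).re + (τ (Q i)).re)]
      _ = 4 ^ R.card := Finset.prod_const 4
  -- final numeric computation
  set e : ℝ := 1 / (2 * (h : ℝ)) with he
  have hh0 : (0:ℝ) < h := by exact_mod_cast Nat.lt_of_lt_of_le (by norm_num) hh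
  have hepos : 0 ≤ e := by rw [he]; positivity
  have key : X ^ e * Y ^ e ≤ 2 := by
    rw [← Real.mul_rpow hXnn hYnn]
    have h2 : (X * Y) ^ e ≤ ((4:ℝ) ^ h) ^ e :=
      Real.rpow_le_rpow (mul_nonneg hXnn hYnn) hXY hepos
    have h3 : (((4:ℝ) ^ h)) ^ e = 2 := by
      rw [← Real.rpow_natCast 4 h, ← Real.rpow_mul (by norm_num)]
      have hhe : (h : ℝ) * e = 1 / 2 := by
        rw [he]; field_simp
      rw [hhe, show (4:ℝ) = 2 ^ (2:ℕ) by norm_num, ← Real.rpow_natCast 2 2,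
        ← Real.rpow_mul (by norm_num)]
      norm_num
    linarith
  have hfin : 2 * (τ (ordProd R P)).re ^ e * (τ (ordProd R Q)).re ^ e ≤ 4 := by
    rw [hXeq, hYeq, mul_assoc]
    nlinarith [key, Real.rpow_nonneg hXnn e, Real.rpow_nonneg hYnn e]
  exact hfin
end
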